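/- The generalized Hahn space h_d has the AK property: for every x ∈ h_d, the r-sections x^{[r]} = (x_1, …, x_r, 0, 0, …) converge to x in the norm ‖·‖_{h_d} as r → ∞. -/
import Mathlib


open Filter

noncomputable def hahnNorm (d : ℕ → ℝ) (x : ℕ → ℝ) : ℝ :=
  ∑' n, d n * |x n - x (n + 1)|

def memHahn (d : ℕ → ℝ) (x : ℕ → ℝ) : Prop :=
  Tendsto x atTop (nhds 0) ∧ Summable (fun n => d n * |x n - x (n + 1)|)

/-- The generalized Hahn space has the AK property: the `r`-sections
`x^{[r]} = (x_1, …, x_r, 0, 0, …)` converge to `x` in the norm of `h_d`. -/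
theorem stmt3 (d : ℕ → ℝ) (hd_pos : ∀ n, 0 < d n) (hd_mono : Monotone d)
    (x : ℕ → ℝ) (hx : memHahn d x) :
    Tendsto (fun r : ℕ => hahnNorm d (fun n => (if n < r then x n else 0) - x n))
      atTop (nhds 0) := by
  obtain ⟨hx0, hg⟩ := hx
  set g : ℕ → ℝ := fun n => d n * |x n - x (n + 1)| with hgdef
  have hd0 : (0:ℝ) < d 0 := hd_pos 0
  -- summability of the absolute differences
  have ha : Summable (fun n => |x n - x (n + 1)|) := by
    apply Summable.of_nonneg_of_le (fun n => abs_nonneg _) (fun n => ?_)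
      (hg.mul_left (d 0)⁻¹)
    rw [inv_mul_eq_div, le_div_iff₀ hd0, hgdef, mul_comm]
    exact mul_le_mul_of_nonneg_right (hd_mono (Nat.zero_le n)) (abs_nonneg _)
  -- the key telescoping estimate
  have keyA : ∀ m : ℕ, d m * |x (m + 1)| ≤ ∑' k, g (k + (m + 1)) := by
    intro m
    set a : ℕ → ℝ := fun k => x (k + (m + 1)) - x (k + (m + 1) + 1) with hadef
    have haS : Summable (fun k => |a k|) := by
      have := (summable_nat_add_iff (f := fun n => |x n - x (n + 1)|) (m + 1)).mpr ha
      simpa [hadef] using this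
    have haS' : Summable a := haS.of_abs
    have hpartial : ∀ n, ∑ i ∈ Finset.range n, a i = x (m + 1) - x (n + (m + 1)) := by
      intro n
      have h := Finset.sum_range_sub' (fun i => x (i + (m + 1))) n
      simpa [hadef, Nat.add_right_comm] using h
    have htend : Tendsto (fun n => ∑ i ∈ Finset.range n, a i) atTop
        (nhds (x (m + 1))) := by
      simp only [hpartial]
      have h2 : Tendsto (fun n : ℕ => x (n + (m + 1))) atTop (nhds 0) :=
        hx0.comp (tendsto_add_atTop_nat (m + 1))
      simpa using tendsto_const_nhds.sub h2
    have htsum : (∑' k, a k) = x (m + 1) :=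
      tendsto_nhds_unique haS'.hasSum.tendsto_sum_nat htend
    have habs : |x (m + 1)| ≤ ∑' k, |a k| := by
      rw [← htsum]
      have h := norm_tsum_le_tsum_norm (f := a) (by simpa [Real.norm_eq_abs] using haS)
      simpa [Real.norm_eq_abs] using h
    calc d m * |x (m + 1)| ≤ d m * ∑' k, |a k| :=
          mul_le_mul_of_nonneg_left habs (hd_pos m).le
      _ = ∑' k, d m * |a k| := (tsum_mul_left).symm
      _ ≤ ∑' k, g (k + (m + 1)) := by
          refine Summable.tsum_le_tsum (fun k => ?_) (haS.mul_left (d m))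
            (by simpa using (summable_nat_add_iff (f := g) (m + 1)).mpr hg)
          exact mul_le_mul_of_nonneg_right
            (hd_mono (Nat.le_add_left m (k + 1) |>.trans_eq (by ring))) (abs_nonneg _)
  -- the term functions
  set F : ℕ → ℕ → ℝ := fun r n =>
    d n * |((if n < r then x n else 0) - x n) - ((if n + 1 < r then x (n + 1) else 0) - x (n + 1))|
    with hFdef
  have hFtail : ∀ r k, F r (k + r) = g (k + r) := by
    intro r k
    have h1 : ¬ (k + r < r) := by omega
    have h2 : ¬ (k + r + 1 < r) := by omega
    simp only [hFdef, h1, h2, if_false, hgdef]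
    rw [abs_sub_comm]
    ring_nf
  have hFsum : ∀ r, Summable (F r) := by
    intro r
    refine (summable_nat_add_iff (f := F r) r).mp ?_
    exact (((summable_nat_add_iff (f := g) r).mpr hg).congr (fun k => (hFtail r k).symm))
  have hFnonneg : ∀ r n, 0 ≤ F r n := fun r n =>
    mul_nonneg (hd_pos n).le (abs_nonneg _)
  set T : ℕ → ℝ := fun r => ∑' k, g (k + r) with hTdef
  have hTnonneg : ∀ r, 0 ≤ T r := fun r =>
    tsum_nonneg (fun k => mul_nonneg (hd_pos _).le (abs_nonneg _))
  have hupper : ∀ r, (∑' n, F r n) ≤ 2 * T r := by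
    intro r
    have hsplit : ∑ i ∈ Finset.range r, F r i + ∑' k, F r (k + r) = ∑' n, F r n :=
      Summable.sum_add_tsum_nat_add r (hFsum r)
    have htail : (∑' k, F r (k + r)) = T r := tsum_congr (fun k => hFtail r k)
    match r with
    | 0 =>
      rw [← hsplit, htail]
      simp only [Finset.range_zero, Finset.sum_empty, zero_add]
      linarith [hTnonneg 0]
    | (m + 1) =>
      have hhead : ∑ i ∈ Finset.range (m + 1), F (m + 1) i = d m * |x (m + 1)| := by
        rw [Finset.sum_range_succ]
        have hzero : ∑ i ∈ Finset.range m, F (m + 1) i = 0 := by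
          apply Finset.sum_eq_zero
          intro i hi
          have h1 : i < m + 1 := by
            have := Finset.mem_range.mp hi; omega
          have h2 : i + 1 < m + 1 := by
            have := Finset.mem_range.mp hi; omega
          simp [hFdef, h1, h2]
        rw [hzero, zero_add]
        have h1 : m < m + 1 := by omega
        have h2 : ¬ (m + 1 < m + 1) := by omega
        simp [hFdef, h1, h2]
      rw [← hsplit, htail, hhead]
      have := keyA m
      have hT : T (m + 1) = ∑' k, g (k + (m + 1)) := rfl
      linarith [this, hT ▸ le_refl (T (m + 1))]
  have hTtend : Tendsto T atTop (nhds 0) := by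
    simpa [hTdef] using tendsto_sum_nat_add g
  have h2T : Tendsto (fun r => 2 * T r) atTop (nhds 0) := by
    simpa using hTtend.const_mul 2
  have heq : ∀ r : ℕ, hahnNorm d (fun n => (if n < r then x n else 0) - x n)
      = ∑' n, F r n := fun r => rfl
  simp only [heq]
  exact squeeze_zero (fun r => tsum_nonneg (hFnonneg r)) hupper h2T
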